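/- If k, m, n are positive integers with n > m and P_k = F_m · F_n, then |(√5/(2√2 · F_m)) · γ^k · α^{−n} − 1| < 4/α^{2n}. -/

import Mathlib

set_option maxHeartbeats 1000000


/-- The Pell sequence: P 0 = 0, P 1 = 1, P (n+2) = 2 * P (n+1) + P n. -/
def pell : ℕ → ℕ
  | 0 => 0
  | 1 => 1
  | n + 2 => 2 * pell (n + 1) + pell n

lemma pell_binet (k : ℕ) :
    (pell k : ℝ) * (2 * Real.sqrt 2) = (1 + Real.sqrt 2) ^ k - (1 - Real.sqrt 2) ^ k := by
  have hs : Real.sqrt 2 ^ 2 = 2 := Real.sq_sqrt (by norm_num)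
  induction k using Nat.strong_induction_on with
  | _ k ih =>
    match k with
    | 0 => simp [pell]
    | 1 => simp [pell]; ring
    | (k+2) =>
      have h1 := ih (k+1) (by omega)
      have h0 := ih k (by omega)
      have e : pell (k+2) = 2 * pell (k+1) + pell k := rfl
      rw [e]
      push_cast
      have p2 : ∀ c : ℝ, c ^ (k+2) = c ^ k * c ^ 2 := fun c => by ring
      rw [p2, p2]
      have p1 : ∀ c : ℝ, c ^ (k+1) = c ^ k * c := fun c => by ring
      rw [p1, p1] at h1
      linear_combination 2 * h1 + h0 + ((1 - Real.sqrt 2) ^ k - (1 + Real.sqrt 2) ^ k) * hs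

/-- If k, m, n are positive integers with n > m and P_k = F_m · F_n, then
|(√5/(2√2·F_m))·γ^k·α^{−n} − 1| < 4/α^{2n}, where α = (1+√5)/2 and γ = 1+√2. -/
theorem linear_form_PFF_2 (k m n : ℕ) (hk : 0 < k) (hm : 0 < m) (hmn : n > m)
    (h : pell k = Nat.fib m * Nat.fib n) :
    |(Real.sqrt 5 / (2 * Real.sqrt 2 * (Nat.fib m : ℝ))) * (1 + Real.sqrt 2) ^ k *
        ((1 + Real.sqrt 5) / 2) ^ (-(n : ℤ)) - 1|
      < 4 / ((1 + Real.sqrt 5) / 2) ^ (2 * n) := by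
  set s : ℝ := Real.sqrt 2 with hsdef
  set t : ℝ := Real.sqrt 5 with htdef
  have hs : s ^ 2 = 2 := Real.sq_sqrt (by norm_num)
  have ht : t ^ 2 = 5 := Real.sq_sqrt (by norm_num)
  have hs0 : (1.4 : ℝ) < s := by nlinarith [Real.sqrt_nonneg 2]
  have hs1 : s < 1.5 := by nlinarith [Real.sqrt_nonneg 2]
  have ht0 : (2.2 : ℝ) < t := by nlinarith [Real.sqrt_nonneg 5]
  have ht1 : t < 2.3 := by nlinarith [Real.sqrt_nonneg 5]
  set α : ℝ := (1 + t) / 2 with hαdef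
  set β : ℝ := (1 - t) / 2 with hβdef
  set γ : ℝ := 1 + s with hγdef
  set δ : ℝ := 1 - s with hδdef
  have hα1 : (1.6 : ℝ) < α := by rw [hαdef]; linarith
  have hα2 : α < 1.65 := by rw [hαdef]; linarith
  have hγ1 : (2.4 : ℝ) < γ := by rw [hγdef]; linarith
  set Fm : ℝ := (Nat.fib m : ℝ) with hFmdef
  set Fn : ℝ := (Nat.fib n : ℝ) with hFndef
  have hFm1 : 1 ≤ Fm := by
    rw [hFmdef]; exact_mod_cast Nat.fib_pos.mpr hm
  have hFn0 : 0 ≤ Fn := by positivity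
  set a : ℝ := α ^ n with hadef
  set g : ℝ := γ ^ k with hgdef
  set x : ℝ := δ ^ k with hxdef
  set y : ℝ := β ^ n with hydef
  have ha1 : α ≤ a := le_self_pow₀ (by linarith) (by omega)
  have hg1 : γ ≤ g := le_self_pow₀ (by linarith) hk.ne'
  have ha0 : (0 : ℝ) < a := by linarith
  have hg0 : (0 : ℝ) < g := by linarith
  -- |x| * g = 1, |y| * a = 1
  have hxg : |x| * g = 1 := by
    have : δ * γ = -1 := by rw [hδdef, hγdef]; nlinarith
    have h2 : x * g = (-1 : ℝ) ^ k := by rw [hxdef, hgdef, ← mul_pow, this]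
    have := congrArg abs h2
    simp only [abs_mul, abs_pow, abs_neg, abs_one, one_pow, abs_of_pos hg0] at this
    exact this
  have hya : |y| * a = 1 := by
    have hβα : β * α = -1 := by rw [hβdef, hαdef]; nlinarith
    have h2 : y * a = (-1 : ℝ) ^ n := by rw [hydef, hadef, ← mul_pow, hβα]
    have := congrArg abs h2
    simp only [abs_mul, abs_pow, abs_neg, abs_one, one_pow, abs_of_pos ha0] at this
    exact this
  have hxle : |x| ≤ 1 := by nlinarith [abs_nonneg x]
  have hyle : |y| ≤ 1 := by nlinarith [abs_nonneg y]
  -- Binet relations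
  have h1 : Fm * Fn * (2 * s) = g - x := by
    have := pell_binet k
    rw [h] at this
    push_cast at this
    rw [hFmdef, hFndef, hgdef, hxdef, hγdef, hδdef]
    exact this
  have h2 : t * Fn = a - y := by
    have hbin := Real.coe_fib_eq n
    unfold Real.goldenRatio Real.goldenConj at hbin
    have ht' : Real.sqrt 5 ≠ 0 := by rw [← htdef]; linarith
    rw [hFndef, hbin, hadef, hydef, hαdef, hβdef, htdef]
    field_simp
  -- key bound : t * a < 6 * s * Fm * g
  have hkey : t * a < 6 * s * Fm * g := by
    have e1 : 2 * s * t * Fn ≤ t * (g + 1) := by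
      nlinarith [(abs_le.mp hxle).1,
        mul_nonneg (mul_nonneg (mul_nonneg (by norm_num : (0:ℝ) ≤ 2) (by linarith : (0:ℝ) ≤ s))
          (by linarith : (0:ℝ) ≤ t)) (mul_nonneg hFn0 (sub_nonneg.mpr hFm1))]
    have hale : 2 * s * a ≤ t * g + t + 2 * s := by
      nlinarith [(abs_le.mp hyle).2, h2]
    nlinarith [mul_le_mul_of_nonneg_left hale (by linarith : (0:ℝ) ≤ t),
      mul_nonneg (sub_nonneg.mpr hFm1) hg0.le]
  -- rewrite the goal
  have hzpow : ((1 + Real.sqrt 5) / 2 : ℝ) ^ (-(n : ℤ)) = a⁻¹ := by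
    rw [zpow_neg, zpow_natCast]
  have hpow2 : ((1 + Real.sqrt 5) / 2 : ℝ) ^ (2 * n) = a ^ 2 := by
    rw [hadef, hαdef, mul_comm 2 n, pow_mul, ← pow_mul, mul_comm n 2, pow_mul]
  rw [hzpow, hpow2]
  have hden : (0 : ℝ) < 2 * s * Fm * a := by positivity
  have hmain : t / (2 * s * Fm) * g * a⁻¹ - 1 = (t * x - 2 * s * Fm * y) / (2 * s * Fm * a) := by
    rw [eq_div_iff hden.ne']
    have hFm0 : Fm ≠ 0 := by linarith
    have hs0' : s ≠ 0 := by linarith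
    field_simp
    linear_combination (-t) * h1 + 2 * s * Fm * h2
  rw [hmain, abs_div, abs_of_pos hden, div_lt_div_iff₀ hden (by positivity)]
  -- numerator bound
  have hnum : |t * x - 2 * s * Fm * y| < 8 * s * Fm / a := by
    have h3 : |t * x - 2 * s * Fm * y| ≤ t * |x| + 2 * s * Fm * |y| := by
      calc |t * x - 2 * s * Fm * y| ≤ |t * x| + |2 * s * Fm * y| := abs_sub _ _
        _ = t * |x| + 2 * s * Fm * |y| := by
            rw [abs_mul, abs_mul, abs_of_pos (show (0:ℝ) < t by linarith),
              abs_of_pos (show (0:ℝ) < 2 * s * Fm by positivity)]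
    have habsx : |x| = 1 / g := eq_div_of_mul_eq hg0.ne' hxg
    have habsy : |y| = 1 / a := eq_div_of_mul_eq ha0.ne' hya
    have hx' : t * |x| < 6 * s * Fm / a := by
      rw [habsx, mul_one_div, div_lt_div_iff₀ hg0 ha0]
      linarith [hkey]
    have hy' : 2 * s * Fm * |y| = 2 * s * Fm / a := by
      rw [habsy]; ring
    calc |t * x - 2 * s * Fm * y| ≤ t * |x| + 2 * s * Fm * |y| := h3
      _ < 6 * s * Fm / a + 2 * s * Fm / a := by rw [hy']; linarith
      _ = 8 * s * Fm / a := by ring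
  have h4 := (lt_div_iff₀ ha0).mp hnum
  nlinarith [mul_lt_mul_of_pos_right h4 ha0]
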